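/- Let G be a connected plane graph with minimum degree at least 3 that contains no cycle of length 4, no cycle of length 7, no cycle of length 9, and no 5-cycle normally adjacent to a 3-cycle. Then no 3-face of G is adjacent to an 8-face of G. -/

import Mathlib

namespace Paper

open SimpleGraph

variable {V : Type*}

/-- The fixed-point-free involution on darts reversing each dart. -/
def dartFlip (G : SimpleGraph V) : Equiv.Perm G.Dart :=
  ⟨SimpleGraph.Dart.symm, SimpleGraph.Dart.symm,
    fun d => SimpleGraph.Dart.symm_symm d, fun d => SimpleGraph.Dart.symm_symm d⟩

/-- A combinatorial embedding (rotation system) of a simple graph: a permutation of the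
darts whose cycles are exactly the sets of darts emanating from a common vertex. -/
structure PlaneEmbedding (G : SimpleGraph V) where
  rot : Equiv.Perm G.Dart
  fst_rot : ∀ d : G.Dart, (rot d).fst = d.fst
  rot_cyclic : ∀ d e : G.Dart, d.fst = e.fst → rot.SameCycle d e

/-- The face permutation of a combinatorial embedding; its orbits are the (boundary walks
of the) faces of the embedding. -/
def PlaneEmbedding.facePerm {G : SimpleGraph V} (E : PlaneEmbedding G) : Equiv.Perm G.Dart :=
  E.rot * dartFlip G

/-- The face (as its set of boundary darts, i.e. the orbit of the face permutation)
containing a given dart. -/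
def faceOf {G : SimpleGraph V} (E : PlaneEmbedding G) (d : G.Dart) : Set G.Dart :=
  {e | E.facePerm.SameCycle d e}

/-- The length of the boundary walk of the face containing a given dart; a `k`-face is a
face whose boundary walk has length `k`, i.e. whose dart-orbit has size `k`. -/
noncomputable def faceSize {G : SimpleGraph V} (E : PlaneEmbedding G) (d : G.Dart) : ℕ :=
  (faceOf E d).ncard

/-- The number of faces of the embedding lying in a given connected component. -/
noncomputable def componentFaceCount {G : SimpleGraph V} (E : PlaneEmbedding G)
    (c : G.ConnectedComponent) : ℕ :=
  Nat.card (Quotient (Setoid.comap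
    (Subtype.val : {d : G.Dart // G.connectedComponentMk d.fst = c} → G.Dart)
    (Equiv.Perm.SameCycle.setoid E.facePerm)))

/-- The embedding is plane (genus zero): Euler's formula `V - E + F = 2` holds on each
connected component containing an edge (stated as `2V + 2F = #darts + 4`, using that the
number of darts is twice the number of edges). -/
def PlaneEmbedding.IsPlane {G : SimpleGraph V} (E : PlaneEmbedding G) : Prop :=
  ∀ c : G.ConnectedComponent, (∃ d : G.Dart, G.connectedComponentMk d.fst = c) →
    2 * {v : V | G.connectedComponentMk v = c}.ncard + 2 * componentFaceCount E c
      = {d : G.Dart | G.connectedComponentMk d.fst = c}.ncard + 4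

/-- `G` is a planar graph: it admits a plane (genus-zero) combinatorial embedding. -/
def IsPlanar (G : SimpleGraph V) : Prop :=
  ∃ E : PlaneEmbedding G, E.IsPlane

/-- `G` has no cycle of length `n`. -/
def NoCycleLen (G : SimpleGraph V) (n : ℕ) : Prop :=
  ∀ (v : V) (c : G.Walk v v), c.IsCycle → c.length ≠ n

/-- Two cycles (given as closed walks) are normally adjacent: their intersection is
isomorphic to `K₂`, i.e. they share exactly one edge together with its two endpoints. -/
def NormAdjWalks (G : SimpleGraph V) {a b : V} (c₁ : G.Walk a a) (c₂ : G.Walk b b) : Prop :=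
  ∃ x y : V, x ≠ y ∧ s(x, y) ∈ c₁.edges ∧ s(x, y) ∈ c₂.edges ∧
    (∀ z : V, (z ∈ c₁.support ∧ z ∈ c₂.support) ↔ (z = x ∨ z = y))

/-- `G` has no `5`-cycle normally adjacent to a `3`-cycle. -/
def No5CycleNormAdj3 (G : SimpleGraph V) : Prop :=
  ∀ (a b : V) (c₁ : G.Walk a a) (c₂ : G.Walk b b),
    c₁.IsCycle → c₁.length = 5 → c₂.IsCycle → c₂.length = 3 →
      ¬ NormAdjWalks G c₁ c₂

/-- `d` lists the boundary darts of a face in order, and this boundary is the closed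
walk `v 0, v 1, …, v (n-1), v 0`. -/
def FaceTraversal {G : SimpleGraph V} (E : PlaneEmbedding G) {n : ℕ}
    (v : ZMod n → V) (d : ZMod n → G.Dart) : Prop :=
  (∀ i, (d i).toProd = (v i, v (i + 1))) ∧ ∀ i, E.facePerm (d i) = d (i + 1)

/-- The cycle `v 0, v 1, …, v (n-1), v 0` (with distinct vertices) bounds a face of the
embedding (traversed in one of the two possible directions). -/
def CycleBoundsFace {G : SimpleGraph V} (E : PlaneEmbedding G) {n : ℕ}
    (v : ZMod n → V) : Prop :=
  Function.Injective v ∧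
    ((∃ d, FaceTraversal E v d) ∨ (∃ d, FaceTraversal E (fun i => v (-i)) d))

/-- The `i`-th vertex of the boundary walk of the face containing the dart `d0`. -/
def boundaryVert {G : SimpleGraph V} (E : PlaneEmbedding G) (d0 : G.Dart) (i : ℕ) : V :=
  ((E.facePerm ^ i) d0).fst

/-- The faces containing the darts `d1`, `d2` are adjacent: their boundaries share at
least one edge. -/
def FacesAdjacent {G : SimpleGraph V} (E : PlaneEmbedding G) (d1 d2 : G.Dart) : Prop :=
  ∃ e1 e2 : G.Dart, E.facePerm.SameCycle d1 e1 ∧ E.facePerm.SameCycle d2 e2 ∧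
    e1.edge = e2.edge

/-- The set of vertices on the boundary of the face containing the dart `d`. -/
def faceVerts {G : SimpleGraph V} (E : PlaneEmbedding G) (d : G.Dart) : Set V :=
  {x | ∃ e : G.Dart, E.facePerm.SameCycle d e ∧ e.fst = x}

/-- The set of edges on the boundary of the face containing the dart `d`. -/
def faceEdges {G : SimpleGraph V} (E : PlaneEmbedding G) (d : G.Dart) : Set (Sym2 V) :=
  {s | ∃ e : G.Dart, E.facePerm.SameCycle d e ∧ e.edge = s}

section Configs

variable [Fintype V]

/-- Configuration (1): a `10`-cycle bounding a face together with a `3`-cycle bounding a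
face, normally adjacent to it along one edge, all eleven vertices having degree `3`. -/
def Config1 (G : SimpleGraph V) [DecidableRel G.Adj] (E : PlaneEmbedding G) : Prop :=
  ∃ (v : ZMod 10 → V) (w : ZMod 3 → V) (u : V),
    CycleBoundsFace E v ∧ CycleBoundsFace E w ∧
    ({w 0, w 1, w 2} : Set V) = {v 0, v 1, u} ∧ u ∉ Set.range v ∧
    (∀ i, G.degree (v i) = 3) ∧ G.degree u = 3

/-- Configuration (2): two vertex-disjoint `10`-cycles `x₁…x₁₀` and `y₁…y₁₀` (indexed here
from `0`), each bounding a face, with edges `x₃y₃` and `x₁₀y₁₀`; all `xᵢ` have degree `3`,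
`y₃` and `y₁₀` have degree `4`, the other `yᵢ` have degree `3`. -/
def Config2 (G : SimpleGraph V) [DecidableRel G.Adj] (E : PlaneEmbedding G) : Prop :=
  ∃ x y : ZMod 10 → V,
    CycleBoundsFace E x ∧ CycleBoundsFace E y ∧
    Set.range x ∩ Set.range y = ∅ ∧
    G.Adj (x 2) (y 2) ∧ G.Adj (x 9) (y 9) ∧
    (∀ i, G.degree (x i) = 3) ∧
    G.degree (y 2) = 4 ∧ G.degree (y 9) = 4 ∧
    (∀ i, i ≠ 2 → i ≠ 9 → G.degree (y i) = 3)

/-- Configuration (3): an `8`-cycle bounding a face and a `5`-cycle bounding a face that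
are normally adjacent (sharing exactly one edge and its endpoints), all eleven vertices
having degree `3`. -/
def Config3 (G : SimpleGraph V) [DecidableRel G.Adj] (E : PlaneEmbedding G) : Prop :=
  ∃ (a : ZMod 8 → V) (b : ZMod 5 → V),
    CycleBoundsFace E a ∧ CycleBoundsFace E b ∧
    Set.range a ∩ Set.range b = {a 0, a 1} ∧
    (∃ j : ZMod 5, (b j = a 0 ∧ b (j + 1) = a 1) ∨ (b j = a 1 ∧ b (j + 1) = a 0)) ∧
    (∀ i, G.degree (a i) = 3) ∧ (∀ j, G.degree (b j) = 3)

end Configs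

open Classical in
/-- The function resulting from the operation `Delete_[u](G, f)`: every neighbour of `u`
loses one unit. -/
noncomputable def deleteFun (G : SimpleGraph V) (u : V) (f : V → ℤ) : V → ℤ :=
  fun v => if G.Adj u v then f v - 1 else f v

open Classical in
/-- The function resulting from the operation `DeleteSave_[u; w](G, f)`: every neighbour
of `u` except `w` loses one unit. -/
noncomputable def deleteSaveFun (G : SimpleGraph V) (u w : V) (f : V → ℤ) : V → ℤ :=
  fun v => if G.Adj u v ∧ v ≠ w then f v - 1 else f v

/-- All vertices of the subgraph of `G` induced on `S` can be removed by a sequence of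
legal applications of the `Delete` and `DeleteSave` operations, starting from the value
function `f`. -/
inductive WeaklyReducible (G : SimpleGraph V) : Set V → (V → ℤ) → Prop
  | empty (f : V → ℤ) : WeaklyReducible G ∅ f
  | delete (S : Set V) (f : V → ℤ) (u : V) (hu : u ∈ S)
      (hnn : ∀ v ∈ S \ {u}, 0 ≤ deleteFun G u f v)
      (h : WeaklyReducible G (S \ {u}) (deleteFun G u f)) : WeaklyReducible G S f
  | deleteSave (S : Set V) (f : V → ℤ) (u w : V) (hu : u ∈ S) (hw : w ∈ S \ {u})
      (hadj : G.Adj u w) (hlt : f w < f u)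
      (hnn : ∀ v ∈ S \ {u}, 0 ≤ deleteSaveFun G u w f v)
      (h : WeaklyReducible G (S \ {u}) (deleteSaveFun G u w f)) : WeaklyReducible G S f

/-- `G` is weakly `d`-degenerate: all its vertices can be removed by a sequence of legal
applications of the `Delete` and `DeleteSave` operations, starting from the constant
function of value `d`. -/
def WeaklyDegenerate (G : SimpleGraph V) (d : ℤ) : Prop :=
  WeaklyReducible G Set.univ (fun _ => d)

/-- The canonical cover of `G` with `s = 2`: two disjoint copies of `G`, on vertex set
`V × Fin 2`, with `(u, i)` adjacent to `(v, j)` iff `uv ∈ E(G)` and `i = j`. -/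
def canonicalCover2 (G : SimpleGraph V) : SimpleGraph (V × Fin 2) where
  Adj a b := G.Adj a.1 b.1 ∧ a.2 = b.2
  symm := ⟨fun _ _ h => ⟨h.1.symm, h.2.symm⟩⟩
  loopless := ⟨fun a h => G.ne_of_adj h.1 rfl⟩

/-- `T` is a strictly `f`-degenerate transversal-candidate set: every nonempty subgraph
`K` of the induced subgraph `H[T]` has a vertex `x` with `deg_K x < f x`. -/
def StrictlyFDegenerateOn {W : Type*} (H : SimpleGraph W) (f : W → ℕ) (T : Set W) : Prop :=
  ∀ K : H.Subgraph, K.verts ⊆ T → K.verts.Nonempty →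
    ∃ x ∈ K.verts, Nat.card (K.neighborSet x) < f x

end Paper

open SimpleGraph


namespace FaceHelper

open SimpleGraph Equiv Function

section Orbit

lemma orbit_facts {α : Type*} [Finite α] (f : Equiv.Perm α) (x : α) (n : ℕ)
    (h : {y | f.SameCycle x y}.ncard = n) :
    (f ^ n) x = x ∧ ∀ i j, i < j → j < n → (f ^ i) x ≠ (f ^ j) x := by
  classical
  have hper : x ∈ Function.periodicPts f := by
    refine ⟨orderOf f, orderOf_pos f, ?_⟩
    show f^[orderOf f] x = x
    have : ⇑(f ^ (orderOf f)) = f^[orderOf f] := rfl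
    rw [← this, pow_orderOf_eq_one]; rfl
  set m := Function.minimalPeriod f x with hm
  have hmpos : 0 < m := Function.minimalPeriod_pos_of_mem_periodicPts hper
  have hset : {y | f.SameCycle x y} = (fun k => f^[k] x) '' (Set.Iio m) := by
    ext y
    constructor
    · intro hy
      obtain ⟨i, _, hi⟩ := Equiv.Perm.SameCycle.exists_pow_eq' hy
      refine ⟨i % m, Nat.mod_lt _ hmpos, ?_⟩
      show f^[i % m] x = y
      rw [Function.iterate_mod_minimalPeriod_eq]
      exact hi
    · rintro ⟨k, -, rfl⟩
      exact ⟨(k : ℤ), by rw [zpow_natCast]; rfl⟩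
  have hcard : {y | f.SameCycle x y}.ncard = m := by
    rw [hset, Set.ncard_image_of_injOn Function.iterate_injOn_Iio_minimalPeriod]
    rw [← Finset.coe_range, Set.ncard_coe_finset, Finset.card_range]
  have hnm : n = m := by rw [← h, hcard]
  constructor
  · show f^[n] x = x
    rw [hnm]
    exact Function.iterate_minimalPeriod
  · intro i j hij hj hEq
    have h1 : i ∈ Set.Iio m := by simp; omega
    have h2 : j ∈ Set.Iio m := by simp; omega
    have := Function.iterate_injOn_Iio_minimalPeriod (f := f) (x := x) h1 h2 hEq
    omega

lemma sameCycle_pow {α : Type*} [Finite α] (f : Equiv.Perm α) {x y : α}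
    (h : f.SameCycle x y) : ∃ k : ℕ, (f ^ k) x = y := by
  obtain ⟨i, -, hi⟩ := Equiv.Perm.SameCycle.exists_pow_eq' h
  exact ⟨i, hi⟩

end Orbit

section Walks

variable {V : Type*} {G : SimpleGraph V}

open SimpleGraph Walk

def segWalk (v : ℕ → V) {n : ℕ} (hadj : ∀ i, i < n → G.Adj (v i) (v (i+1))) :
    (m : ℕ) → (a : ℕ) → a + m ≤ n → G.Walk (v a) (v (a + m))
  | 0, a, _ => (Walk.nil : G.Walk (v a) (v a)).copy rfl (congrArg v (by omega))
  | m+1, a, h =>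
      (Walk.cons (hadj a (by omega)) (segWalk v hadj m (a+1) (by omega))).copy rfl
        (congrArg v (by omega))

lemma segWalk_zero (v : ℕ → V) {n : ℕ} (hadj : ∀ i, i < n → G.Adj (v i) (v (i+1)))
    (a : ℕ) (h : a + 0 ≤ n) :
    segWalk v hadj 0 a h = (Walk.nil : G.Walk (v a) (v a)).copy rfl (congrArg v (by omega)) := rfl

lemma segWalk_succ (v : ℕ → V) {n : ℕ} (hadj : ∀ i, i < n → G.Adj (v i) (v (i+1)))
    (m a : ℕ) (h : a + (m+1) ≤ n) :
    segWalk v hadj (m+1) a h =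
      (Walk.cons (hadj a (by omega)) (segWalk v hadj m (a+1) (by omega))).copy rfl
        (congrArg v (by omega)) := rfl

lemma segWalk_length (v : ℕ → V) {n : ℕ} (hadj : ∀ i, i < n → G.Adj (v i) (v (i+1))) :
    ∀ (m a : ℕ) (h : a + m ≤ n), (segWalk v hadj m a h).length = m := by
  intro m
  induction m with
  | zero => intro a h; rw [segWalk_zero]; simp
  | succ m ih => intro a h; rw [segWalk_succ]; simp [ih]

lemma segWalk_support (v : ℕ → V) {n : ℕ} (hadj : ∀ i, i < n → G.Adj (v i) (v (i+1))) :
    ∀ (m a : ℕ) (h : a + m ≤ n),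
      (segWalk v hadj m a h).support = (List.range (m+1)).map (fun i => v (a+i)) := by
  intro m
  induction m with
  | zero => intro a h; rw [segWalk_zero]; simp [List.range_succ]
  | succ m ih =>
      intro a h
      rw [segWalk_succ, Walk.support_copy, Walk.support_cons, ih]
      conv_rhs => rw [List.range_succ_eq_map]
      rw [List.map_cons, List.map_map, Nat.add_zero]
      congr 1
      apply List.map_congr_left
      intro i _
      simp only [Function.comp_apply]
      congr 1
      omega

lemma segWalk_edges (v : ℕ → V) {n : ℕ} (hadj : ∀ i, i < n → G.Adj (v i) (v (i+1))) :
    ∀ (m a : ℕ) (h : a + m ≤ n),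
      (segWalk v hadj m a h).edges = (List.range m).map (fun i => s(v (a+i), v (a+i+1))) := by
  intro m
  induction m with
  | zero => intro a h; rw [segWalk_zero]; simp
  | succ m ih =>
      intro a h
      rw [segWalk_succ, Walk.edges_copy, Walk.edges_cons, ih]
      conv_rhs => rw [List.range_succ_eq_map]
      rw [List.map_cons, List.map_map, Nat.add_zero]
      congr 1
      apply List.map_congr_left
      intro i _
      simp only [Function.comp_apply]
      have e : a+1+i = a+(i+1) := by omega
      rw [e]

lemma cycle_of_fn {n : ℕ} (hn : 3 ≤ n) (v : ℕ → V)
    (hadj : ∀ i, i < n → G.Adj (v i) (v (i+1)))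
    (hcl : v n = v 0)
    (hinj : ∀ i j, i < j → j < n → v i ≠ v j) :
    ∃ c : G.Walk (v 0) (v 0), c.IsCycle ∧ c.length = n ∧
      (∀ u, u ∈ c.support ↔ ∃ i, i < n ∧ v i = u) ∧
      (∀ e, e ∈ c.edges ↔ ∃ i, i < n ∧ s(v i, v (i+1)) = e) := by
  have h0n : 0 + n ≤ n := by omega
  let c : G.Walk (v 0) (v 0) := (segWalk v hadj n 0 h0n).copy rfl (by rw [Nat.zero_add, hcl])
  have hlen : c.length = n := by
    simp only [c, Walk.length_copy, segWalk_length]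
  have hsupp : c.support = (List.range (n+1)).map (fun i => v i) := by
    simp only [c, Walk.support_copy, segWalk_support]
    apply List.map_congr_left
    intro i _
    rw [Nat.zero_add]
  have hedges : c.edges = (List.range n).map (fun i => s(v i, v (i+1))) := by
    simp only [c, Walk.edges_copy, segWalk_edges]
    apply List.map_congr_left
    intro i _
    rw [Nat.zero_add]
  have hne : ∀ i j, i < n → j < n → i ≠ j → v i ≠ v j := by
    intro i j hi hj hij
    rcases Nat.lt_or_ge i j with h | h
    · exact hinj i j h hj
    · exact (hinj j i (by omega) hi).symm
  refine ⟨c, ?_, hlen, ?_, ?_⟩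
  · rw [SimpleGraph.Walk.isCycle_def]
    refine ⟨⟨?_⟩, ?_, ?_⟩
    · rw [hedges]
      refine List.Nodup.map_on ?_ (List.nodup_range (n := n))
      intro i hi j hj hEq
      rw [List.mem_range] at hi hj
      by_contra hij
      rcases Sym2.eq_iff.mp hEq with ⟨h1, h2⟩ | ⟨h1, h2⟩
      · exact hne i j hi hj hij h1
      · rcases Nat.lt_or_ge i j with hlt | hge
        · rcases Nat.lt_or_ge (i+1) j with hlt2 | hge2
          · exact hne (i+1) j (by omega) hj (by omega) h2
          · have hj1 : j = i + 1 := by omega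
            subst hj1
            rcases Nat.lt_or_ge (i+2) n with h3 | h3
            · exact hne i (i+2) hi h3 (by omega) h1
            · have hn2 : i + 2 = n := by omega
              have hv : v i = v 0 := by rw [h1, hn2, hcl]
              have hi0 : i = 0 := by
                by_contra h0
                exact hne 0 i (by omega) hi (by omega) hv.symm
              omega
        · rcases Nat.lt_or_ge (j+1) i with hlt2 | hge2
          · rcases Nat.lt_or_ge (j+1) n with h3 | h3
            · exact hne (j+1) i h3 hi (by omega) h1.symm
            · have hn2 : j + 1 = n := by omega
              have hv : v i = v 0 := by rw [h1, hn2, hcl]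
              have hi0 : i = 0 := by
                by_contra h0
                exact hne 0 i (by omega) hi (by omega) hv.symm
              omega
          · have hi1 : i = j + 1 := by omega
            subst hi1
            rcases Nat.lt_or_ge (j+2) n with h3 | h3
            · exact hne j (j+2) hj h3 (by omega) h2.symm
            · have hn2 : j + 2 = n := by omega
              have hv : v j = v 0 := by
                rw [← h2, show j+1+1 = n by omega, hcl]
              have hj0 : j = 0 := by
                by_contra h0
                exact hne 0 j (by omega) hj (by omega) hv.symm
              omega
    · intro hnil
      simp only [hnil, Walk.length_nil] at hlen
      omega
    · rw [hsupp, List.range_succ_eq_map, List.map_cons, List.tail_cons, List.map_map]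
      refine List.Nodup.map_on ?_ (List.nodup_range (n := n))
      intro i hi j hj hEq
      rw [List.mem_range] at hi hj
      simp only [Function.comp_apply, Nat.succ_eq_add_one] at hEq
      by_contra hij
      rcases Nat.lt_or_ge (i+1) n with h1 | h1
      · rcases Nat.lt_or_ge (j+1) n with h2 | h2
        · exact hne (i+1) (j+1) h1 h2 (by omega) hEq
        · have : j + 1 = n := by omega
          have hv : v (i+1) = v 0 := by rw [hEq, this, hcl]
          exact hne 0 (i+1) (by omega) h1 (by omega) hv.symm
      · have : i + 1 = n := by omega
        have hv : v (j+1) = v 0 := by rw [← hEq, this, hcl]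
        rcases Nat.lt_or_ge (j+1) n with h2 | h2
        · exact hne 0 (j+1) (by omega) h2 (by omega) hv.symm
        · omega
  · intro u
    rw [hsupp]
    simp only [List.mem_map, List.mem_range]
    constructor
    · rintro ⟨i, hi, rfl⟩
      rcases Nat.lt_or_ge i n with h | h
      · exact ⟨i, h, rfl⟩
      · have : i = n := by omega
        exact ⟨0, by omega, by rw [this, hcl]⟩
    · rintro ⟨i, hi, rfl⟩
      exact ⟨i, by omega, rfl⟩
  · intro e
    rw [hedges]
    simp only [List.mem_map, List.mem_range]

lemma no4cycle (h4 : Paper.NoCycleLen G 4) (a b c d : V)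
    (hab : G.Adj a b) (hbc : G.Adj b c) (hcd : G.Adj c d) (hda : G.Adj d a)
    (hac : a ≠ c) (hbd : b ≠ d) : False := by
  have key := cycle_of_fn (G := G) (n := 4) (by norm_num)
    (fun i => match i with | 0 => a | 1 => b | 2 => c | 3 => d | _+4 => a)
    ?_ rfl ?_
  · obtain ⟨cyc, hcyc, hlen, -, -⟩ := key
    exact h4 _ cyc hcyc hlen
  · intro i hi
    interval_cases i
    · exact hab
    · exact hbc
    · exact hcd
    · exact hda
  · intro i j hij hj
    interval_cases j <;> interval_cases i <;>
      first
        | exact hab.ne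
        | exact hbc.ne
        | exact hcd.ne
        | exact hac
        | exact hbd
        | exact hda.ne'

lemma pent_helper (h4 : Paper.NoCycleLen G 4) (h53 : Paper.No5CycleNormAdj3 G)
    (x y z p2 p3 p4 : V)
    (axy : G.Adj x y) (ayz : G.Adj y z) (azx : G.Adj z x)
    (a1 : G.Adj x p2) (a2 : G.Adj p2 p3) (a3 : G.Adj p3 p4) (a4 : G.Adj p4 y)
    (n1 : y ≠ p2) (n2 : y ≠ p3) (n3 : x ≠ p3) (n4 : x ≠ p4) (n5 : p2 ≠ p4) : False := by
  by_cases hz2 : z = p2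
  · exact no4cycle h4 z p3 p4 y (by rw [hz2]; exact a2) a3 a4 ayz
      (by rw [hz2]; exact n5) n2.symm
  · by_cases hz3 : z = p3
    · exact no4cycle h4 y x p2 z axy.symm a1 (by rw [hz3]; exact a2) ayz.symm n1 azx.ne'
    · by_cases hz4 : z = p4
      · exact no4cycle h4 x p2 p3 z a1 a2 (by rw [hz4]; exact a3) azx n3
          (by rw [hz4]; exact n5)
      · -- z is not on the pentagon: 5-cycle normally adjacent to triangle
        have hpent := cycle_of_fn (G := G) (n := 5) (by norm_num)
          (fun i => match i with | 0 => y | 1 => x | 2 => p2 | 3 => p3 | 4 => p4 | _+5 => y)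
          ?_ rfl ?_
        rotate_left
        · intro i hi
          interval_cases i
          · exact axy.symm
          · exact a1
          · exact a2
          · exact a3
          · exact a4
        · intro i j hij hj
          interval_cases j <;> interval_cases i <;>
            first
              | exact axy.ne'
              | exact a1.ne
              | exact a2.ne
              | exact a3.ne
              | exact a4.ne'
              | exact n1
              | exact n2
              | exact n3
              | exact n4
              | exact n5
        have htri := cycle_of_fn (G := G) (n := 3) (by norm_num)
          (fun i => match i with | 0 => x | 1 => y | 2 => z | _+3 => x)
          ?_ rfl ?_
        rotate_left
        · intro i hi
          interval_cases i
          · exact axy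
          · exact ayz
          · exact azx
        · intro i j hij hj
          interval_cases j <;> interval_cases i <;>
            first
              | exact axy.ne
              | exact azx.ne'
              | exact ayz.ne
        obtain ⟨c5, hc5, hlen5, hsup5, hedge5⟩ := hpent
        obtain ⟨c3, hc3, hlen3, hsup3, hedge3⟩ := htri
        refine h53 _ _ c5 c3 hc5 hlen5 hc3 hlen3 ?_
        refine ⟨x, y, axy.ne, ?_, ?_, ?_⟩
        · exact (hedge5 _).mpr ⟨0, by omega, Sym2.eq_swap⟩
        · exact (hedge3 _).mpr ⟨0, by omega, rfl⟩
        · intro u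
          constructor
          · rintro ⟨hu5, hu3⟩
            obtain ⟨j, hj, hji⟩ := (hsup3 u).mp hu3
            obtain ⟨i, hi, rfl⟩ := (hsup5 u).mp hu5
            interval_cases i
            · exact Or.inr rfl
            · exact Or.inl rfl
            · exfalso
              interval_cases j
              · exact a1.ne hji
              · exact n1 hji
              · exact hz2 hji
            · exfalso
              interval_cases j
              · exact n3 hji
              · exact n2 hji
              · exact hz3 hji
            · exfalso
              interval_cases j
              · exact n4 hji
              · exact a4.ne' hji
              · exact hz4 hji
          · rintro (rfl | rfl)
            · exact ⟨(hsup5 _).mpr ⟨1, by omega, rfl⟩, (hsup3 _).mpr ⟨0, by omega, rfl⟩⟩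
            · exact ⟨(hsup5 _).mpr ⟨0, by omega, rfl⟩, (hsup3 _).mpr ⟨1, by omega, rfl⟩⟩

end Walks

section Degree

variable {V : Type*} {G : SimpleGraph V} [Fintype V] [DecidableRel G.Adj]

lemma degree_le_two (v : V) (a b : G.Dart)
    (h : ∀ g : G.Dart, g.fst = v → g = a ∨ g = b) : G.degree v ≤ 2 := by
  classical
  have hsub : G.neighborFinset v ⊆ {a.snd, b.snd} := by
    intro u hu
    rw [SimpleGraph.mem_neighborFinset] at hu
    rcases h ⟨(v, u), hu⟩ rfl with hg | hg
    · have : u = a.snd := congrArg (fun dd : G.Dart => dd.toProd.2) hg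
      simp [this]
    · have : u = b.snd := congrArg (fun dd : G.Dart => dd.toProd.2) hg
      simp [this]
  calc G.degree v = (G.neighborFinset v).card := rfl
    _ ≤ ({a.snd, b.snd} : Finset V).card := Finset.card_le_card hsub
    _ ≤ 2 := Finset.card_insert_le _ _ |>.trans (by simp)

lemma rot_fixed_contra (E : Paper.PlaneEmbedding G) (hmin : ∀ v : V, 3 ≤ G.degree v)
    (a : G.Dart) (ha : E.rot a = a) : False := by
  have key : ∀ g : G.Dart, g.fst = a.fst → g = a ∨ g = a := by
    intro g hg
    obtain ⟨k, hk⟩ := sameCycle_pow E.rot (E.rot_cyclic a g hg.symm)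
    have hfix : (⇑E.rot)^[k] a = a := Function.IsFixedPt.iterate ha k
    left
    rw [← hk]
    exact hfix
  have h1 := degree_le_two a.fst a a (by simpa using key)
  have h2 := hmin a.fst
  omega

lemma rot_two_cycle_contra (E : Paper.PlaneEmbedding G) (hmin : ∀ v : V, 3 ≤ G.degree v)
    (a b : G.Dart) (hfst : b.fst = a.fst) (h1 : E.rot a = b) (h2 : E.rot b = a) : False := by
  have h2fix : Function.IsFixedPt (⇑E.rot)^[2] a := by
    show E.rot (E.rot a) = a
    rw [h1, h2]
  have key : ∀ g : G.Dart, g.fst = a.fst → g = a ∨ g = b := by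
    intro g hg
    obtain ⟨k, hk⟩ := sameCycle_pow E.rot (E.rot_cyclic a g hg.symm)
    have hq : k = k % 2 + 2 * (k / 2) := by omega
    have hiter : (⇑E.rot)^[k] a = (⇑E.rot)^[k % 2] a := by
      conv_lhs => rw [hq]
      rw [Function.iterate_add_apply, Function.iterate_mul]
      rw [Function.IsFixedPt.iterate h2fix (k / 2)]
    have hk' : (⇑E.rot)^[k % 2] a = g := by rw [← hiter]; exact hk
    have hmod : k % 2 = 0 ∨ k % 2 = 1 := by omega
    rcases hmod with hm | hm
    · left; rw [hm] at hk'; exact hk'.symm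
    · right; rw [hm] at hk'; rw [← hk']; exact h1
  have hd1 := degree_le_two a.fst a b key
  have hd2 := hmin a.fst
  omega

end Degree

end FaceHelper

/-- No 3-face is adjacent to a 8-face. -/
theorem statement18 {V : Type*} [Fintype V] (G : SimpleGraph V) [DecidableRel G.Adj]
    (hconn : G.Connected)
    (E : Paper.PlaneEmbedding G) (hE : E.IsPlane)
    (hmin : ∀ v : V, 3 ≤ G.degree v)
    (h4 : Paper.NoCycleLen G 4) (h7 : Paper.NoCycleLen G 7)
    (h9 : Paper.NoCycleLen G 9) (h53 : Paper.No5CycleNormAdj3 G) :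
    ∀ d1 d2 : G.Dart, Paper.faceSize E d1 = 3 → Paper.faceSize E d2 = 8 →
      ¬ Paper.FacesAdjacent E d1 d2 := by
  classical
  intro d1 d2 hf3 hf8 hFA
  obtain ⟨e1, e2, s1, s2, hedge⟩ := hFA
  set F := Paper.PlaneEmbedding.facePerm E with hFset
  have hfaceOf : ∀ p q : G.Dart, F.SameCycle p q → Paper.faceOf E p = Paper.faceOf E q := by
    intro p q h
    ext r
    exact ⟨fun hr => h.symm.trans hr, fun hr => h.trans hr⟩
  have hface1 : (Paper.faceOf E e1).ncard = 3 := by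
    rw [(hfaceOf d1 e1 s1).symm]; exact hf3
  have hface2 : (Paper.faceOf E e2).ncard = 8 := by
    rw [(hfaceOf d2 e2 s2).symm]; exact hf8
  have horb3 := FaceHelper.orbit_facts F e1 3 hface1
  have horb8 := FaceHelper.orbit_facts F e2 8 hface2
  have hdisj : ∀ p q : G.Dart, F.SameCycle e1 p → F.SameCycle e2 q → p ≠ q := by
    intro p q hp hq hpq
    have h12 : F.SameCycle e1 e2 := by
      rw [hpq] at hp
      exact hp.trans hq.symm
    have h38 : (3 : ℕ) = 8 := by
      rw [← hface1, ← hface2, hfaceOf e1 e2 h12]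
    omega
  have he2 : e2 = e1.symm := by
    rcases (SimpleGraph.dart_edge_eq_iff e1 e2).mp hedge with h | h
    · exact absurd h (hdisj e1 e2 (Equiv.Perm.SameCycle.refl F e1)
        (Equiv.Perm.SameCycle.refl F e2))
    · rw [h, SimpleGraph.Dart.symm_symm]
  have hFapp : ∀ g : G.Dart, F g = E.rot g.symm := fun g => rfl
  -- the triangle
  set T : ℕ → G.Dart := fun j => (F ^ j) e1 with hT
  have hT0 : T 0 = e1 := by simp [hT]
  have hTsucc : ∀ j, T (j+1) = E.rot (T j).symm := by
    intro j
    show (F ^ (j+1)) e1 = E.rot ((F ^ j) e1).symm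
    rw [pow_succ', Equiv.Perm.mul_apply]
    exact hFapp _
  have hT3 : ∀ j, T (j+3) = T j := by
    intro j
    show (F ^ (j+3)) e1 = (F ^ j) e1
    rw [pow_add, Equiv.Perm.mul_apply, horb3.1]
  set x := e1.fst with hx
  set y := e1.snd with hy
  set z := (T 1).snd with hz
  have hT0p : (T 0).toProd = (x, y) := by rw [hT0]
  have hTfst : ∀ j, (T (j+1)).fst = (T j).snd := by
    intro j
    rw [hTsucc j, E.fst_rot]
    rfl
  have hT1p : (T 1).toProd = (y, z) := by
    refine Prod.ext ?_ rfl
    have h := hTfst 0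
    rw [hT0] at h
    exact h
  have hT30 : T 3 = T 0 := hT3 0
  have hT2p : (T 2).toProd = (z, x) := by
    refine Prod.ext (hTfst 1) ?_
    have h : (T 3).fst = (T 2).snd := hTfst 2
    rw [hT30, hT0] at h
    exact h.symm
  have axy : G.Adj x y := e1.adj
  have ayz : G.Adj y z := by
    have h := (T 1).adj
    rw [hT1p] at h
    exact h
  have azx : G.Adj z x := by
    have h := (T 2).adj
    rw [hT2p] at h
    exact h
  -- the 8-walk
  set D : ℕ → G.Dart := fun i => (F ^ i) e2 with hD
  set w : ℕ → V := fun i => (D i).fst with hwdef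
  have hD0 : D 0 = e1.symm := by simp [hD, he2]
  have hDsucc : ∀ i, D (i+1) = E.rot (D i).symm := by
    intro i
    show (F ^ (i+1)) e2 = E.rot ((F ^ i) e2).symm
    rw [pow_succ', Equiv.Perm.mul_apply]
    exact hFapp _
  have hD8 : ∀ i, D (i+8) = D i := by
    intro i
    show (F ^ (i+8)) e2 = (F ^ i) e2
    rw [pow_add, Equiv.Perm.mul_apply, horb8.1]
  have hwsnd : ∀ i, (D i).snd = w (i+1) := by
    intro i
    have h : (D (i+1)).fst = (D i).symm.fst := by rw [hDsucc i, E.fst_rot]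
    exact h.symm
  have hDto : ∀ i, (D i).toProd = (w i, w (i+1)) := fun i => Prod.ext rfl (hwsnd i)
  have hGadj : ∀ i, G.Adj (w i) (w (i+1)) := by
    intro i
    have h := (D i).adj
    rw [hDto i] at h
    exact h
  have hw8 : ∀ i, w (i+8) = w i := fun i => congrArg (fun g : G.Dart => g.fst) (hD8 i)
  have hw0 : w 0 = y := by
    show (D 0).fst = y
    rw [hD0]
    rfl
  have hw1 : w 1 = x := by
    have h := hwsnd 0
    rw [hD0] at h
    exact h.symm
  have hDinj : ∀ i j, i < j → j < 8 → D i ≠ D j := fun i j hij hj => horb8.2 i j hij hj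
  have hDmod : ∀ i, D i = D (i % 8) := by
    intro i
    induction i using Nat.strong_induction_on with
    | _ i ih =>
      rcases Nat.lt_or_ge i 8 with h | h
      · rw [Nat.mod_eq_of_lt h]
      · have hi : i = (i - 8) + 8 := by omega
        rw [hi, hD8 (i-8), ih (i-8) (by omega)]
        congr 1
        omega
  have hDne : ∀ i k, 0 < k → k < 8 → D (i+k) ≠ D i := by
    intro i k hk0 hk8 hEq
    rw [hDmod (i+k), hDmod i] at hEq
    have h1 : (i+k) % 8 ≠ i % 8 := by omega
    rcases Nat.lt_or_ge ((i+k) % 8) (i % 8) with h | h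
    · exact hDinj _ _ h (Nat.mod_lt _ (by omega)) hEq
    · exact hDinj _ _ (by omega) (Nat.mod_lt _ (by omega)) hEq.symm
  have hTsc : ∀ j, F.SameCycle e1 (T j) := fun j => ⟨(j : ℤ), by rw [zpow_natCast]⟩
  have hDsc : ∀ i, F.SameCycle e2 (D i) := fun i => ⟨(i : ℤ), by rw [zpow_natCast]⟩
  have hDT : ∀ i j, D i ≠ T j := by
    intro i j h
    exact hdisj (T j) (D i) (hTsc j) (hDsc i) h.symm
  have hNT1 : ∀ i, ¬ (w i = x ∧ w (i+1) = y) := by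
    rintro i ⟨h1, h2⟩
    apply hDT i 0
    apply SimpleGraph.Dart.ext
    rw [hDto i, hT0p, h1, h2]
  have hBT : ∀ i, w (i+2) ≠ w i := by
    intro i hEq
    have hDs : D (i+1) = (D i).symm := by
      apply SimpleGraph.Dart.ext
      rw [hDto (i+1), SimpleGraph.Dart.symm_toProd, hDto i, Prod.swap_prod_mk]
      exact Prod.ext rfl hEq
    have hrfix : E.rot (D i).symm = (D i).symm := by
      have h := hDsucc i
      rw [hDs] at h
      exact h.symm
    exact FaceHelper.rot_fixed_contra E hmin _ hrfix
  have hCR1 : ∀ i, w i = y → w (i+1) = x → w (i+2) = z → False := by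
    intro i h1 h2 h3
    have hDi : D i = e1.symm := by
      apply SimpleGraph.Dart.ext
      rw [hDto i, SimpleGraph.Dart.symm_toProd]
      exact Prod.ext h1 h2
    have hDi1 : D (i+1) = (T 2).symm := by
      apply SimpleGraph.Dart.ext
      rw [hDto (i+1), SimpleGraph.Dart.symm_toProd, hT2p, Prod.swap_prod_mk]
      exact Prod.ext h2 h3
    have hra : E.rot e1 = (T 2).symm := by
      have h := hDsucc i
      rw [hDi, hDi1, SimpleGraph.Dart.symm_symm] at h
      exact h.symm
    have hrb : E.rot ((T 2).symm) = e1 := by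
      have h := hTsucc 2
      have h' : T 3 = E.rot (T 2).symm := h
      rw [hT30, hT0] at h'
      exact h'.symm
    refine FaceHelper.rot_two_cycle_contra E hmin e1 ((T 2).symm) ?_ hra hrb
    exact congrArg Prod.snd hT2p
  have hCR2 : ∀ i, w i = z → w (i+1) = y → w (i+2) = x → False := by
    intro i h1 h2 h3
    have hDi : D i = (T 1).symm := by
      apply SimpleGraph.Dart.ext
      rw [hDto i, SimpleGraph.Dart.symm_toProd, hT1p, Prod.swap_prod_mk]
      exact Prod.ext h1 h2
    have hDi1 : D (i+1) = e1.symm := by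
      apply SimpleGraph.Dart.ext
      rw [hDto (i+1), SimpleGraph.Dart.symm_toProd]
      exact Prod.ext h2 h3
    have hrb : E.rot (T 1) = e1.symm := by
      have h := hDsucc i
      rw [hDi, hDi1, SimpleGraph.Dart.symm_symm] at h
      exact h.symm
    have hra : E.rot (e1.symm) = T 1 := by
      have h := hTsucc 0
      rw [hT0] at h
      exact h.symm
    refine FaceHelper.rot_two_cycle_contra E hmin (e1.symm) (T 1) ?_ hra hrb
    have hfs : (T 1).fst = y := congrArg Prod.fst hT1p
    exact hfs
  have hCR3 : ∀ i, w i = x → w (i+1) = z → w (i+2) = y → False := by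
    intro i h1 h2 h3
    have hDi : D i = (T 2).symm := by
      apply SimpleGraph.Dart.ext
      rw [hDto i, SimpleGraph.Dart.symm_toProd, hT2p, Prod.swap_prod_mk]
      exact Prod.ext h1 h2
    have hDi1 : D (i+1) = (T 1).symm := by
      apply SimpleGraph.Dart.ext
      rw [hDto (i+1), SimpleGraph.Dart.symm_toProd, hT1p, Prod.swap_prod_mk]
      exact Prod.ext h2 h3
    have hrb : E.rot (T 2) = (T 1).symm := by
      have h := hDsucc i
      rw [hDi, hDi1, SimpleGraph.Dart.symm_symm] at h
      exact h.symm
    have hra : E.rot ((T 1).symm) = T 2 := (hTsucc 1).symm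
    refine FaceHelper.rot_two_cycle_contra E hmin ((T 1).symm) (T 2) ?_ hra hrb
    exact (congrArg Prod.fst hT2p).trans (congrArg Prod.snd hT1p).symm
  -- basic distance facts
  have hDiff4 : ∀ i, w (i+4) ≠ w i := by
    intro i h
    have hda : G.Adj (w (i+3)) (w i) := by
      have hh : G.Adj (w (i+3)) (w (i+4)) := hGadj (i+3)
      rw [h] at hh
      exact hh
    exact FaceHelper.no4cycle h4 (w i) (w (i+1)) (w (i+2)) (w (i+3))
      (hGadj i) (hGadj (i+1)) (hGadj (i+2)) hda (hBT i).symm (hBT (i+1)).symm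
  have hP1 : ∀ a, w a = w (a+3) → w (a+1) = w (a+4) → False := by
    intro a h1 h2
    apply hDne a 3 (by omega) (by omega)
    apply SimpleGraph.Dart.ext
    rw [hDto (a+3), hDto a]
    exact Prod.ext h1.symm h2.symm
  have hP2 : ∀ a, w a = w (a+3) → w (a+2) = w (a+5) → False := by
    intro a h1 h2
    have hcd : G.Adj (w (a+2)) (w (a+4)) := by
      have hh : G.Adj (w (a+4)) (w (a+5)) := hGadj (a+4)
      rw [← h2] at hh
      exact hh.symm
    have hda : G.Adj (w (a+4)) (w a) := by
      have hh : G.Adj (w (a+3)) (w (a+4)) := hGadj (a+3)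
      rw [← h1] at hh
      exact hh.symm
    exact FaceHelper.no4cycle h4 (w a) (w (a+1)) (w (a+2)) (w (a+4))
      (hGadj a) (hGadj (a+1)) hcd hda (hBT a).symm (fun h => hP1 a h1 h)
  have hP3 : ∀ a, w a = w (a+3) → w (a+3) = w (a+6) → False := by
    intro a h1 h2
    exact hBT (a+6) ((hw8 a).trans (h1.trans h2))
  have hnotE : ∀ a k, (k = 1 ∨ k = 2 ∨ k = 3 ∨ k = 5 ∨ k = 6 ∨ k = 7) →
      w a = w (a+3) → w (a+k) = w (a+k+3) → False := by
    intro a k hk h1 h2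
    have e811 : w (a+8) = w (a+11) :=
      (hw8 a).trans (h1.trans ((hw8 (a+3)).symm : w (a+3) = w (a+11)))
    rcases hk with rfl|rfl|rfl|rfl|rfl|rfl
    · exact hP1 a h1 h2
    · exact hP2 a h1 h2
    · exact hP3 a h1 h2
    · exact hP3 (a+5) h2 e811
    · exact hP2 (a+6) h2 e811
    · exact hP1 (a+7) h2 e811
  -- triangle-at-shared-edge cases
  have hTriA : ∀ b, w b = w (b+3) → w b = y → w (b+1) = x → False := by
    intro b hEb hby hbx
    by_cases hp : w (b+2) = z
    · exact hCR1 b hby hbx hp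
    · refine FaceHelper.no4cycle h4 z x (w (b+2)) y azx ?_ ?_ ayz (fun h => hp h.symm) axy.ne
      · have hh : G.Adj (w (b+1)) (w (b+2)) := hGadj (b+1)
        rw [hbx] at hh
        exact hh
      · have hh : G.Adj (w (b+2)) (w (b+3)) := hGadj (b+2)
        rw [← hEb, hby] at hh
        exact hh
  have hTriB : ∀ b, w b = w (b+3) → w (b+1) = y → w (b+2) = x → False := by
    intro b hEb hby hbx
    by_cases hp : w b = z
    · exact hCR1 (b+1) hby hbx (hEb.symm.trans hp)
    · refine FaceHelper.no4cycle h4 z y (w b) x ayz.symm ?_ ?_ azx.symm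
        (fun h => hp h.symm) axy.ne'
      · have hh : G.Adj (w b) (w (b+1)) := hGadj b
        rw [hby] at hh
        exact hh.symm
      · have hh : G.Adj (w (b+2)) (w (b+3)) := hGadj (b+2)
        rw [hbx, ← hEb] at hh
        exact hh.symm
  have hTriC : ∀ b, w b = w (b+3) → w (b+2) = y → w (b+3) = x → False := by
    intro b hEb hby hbx
    have hbx0 : w b = x := hEb.trans hbx
    by_cases hp : w (b+1) = z
    · exact hCR3 b hbx0 hp hby
    · refine FaceHelper.no4cycle h4 z x (w (b+1)) y azx ?_ ?_ ayz (fun h => hp h.symm) axy.ne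
      · have hh : G.Adj (w b) (w (b+1)) := hGadj b
        rw [hbx0] at hh
        exact hh
      · have hh : G.Adj (w (b+1)) (w (b+2)) := hGadj (b+1)
        rw [hby] at hh
        exact hh
  have hw8v : w 8 = y := (hw8 0).trans hw0
  have hw9v : w 9 = x := (hw8 1).trans hw1
  by_cases hE0 : w 0 = w 3
  · exact hTriA 0 hE0 hw0 hw1
  by_cases hE6 : w 6 = w 9
  · exact hTriC 6 hE6 hw8v hw9v
  by_cases hE7 : w 7 = w 10
  · exact hTriB 7 hE7 hw8v hw9v
  by_cases hE1 : w 1 = w 4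
  · by_cases hE5 : w 5 = w 8
    · exact hNT1 4 ⟨hE1.symm.trans hw1, hE5.trans hw8v⟩
    · -- pentagon (y, x, w5, w6, w7)
      refine FaceHelper.pent_helper h4 h53 x y z (w 5) (w 6) (w 7) axy ayz azx
        ?_ (hGadj 5) (hGadj 6) ?_ ?_ ?_ ?_ ?_ (fun h => hBT 5 h.symm)
      · have hh : G.Adj (w 4) (w 5) := hGadj 4
        rw [← hE1, hw1] at hh
        exact hh
      · have hh : G.Adj (w 7) (w 8) := hGadj 7
        rw [hw8v] at hh
        exact hh
      · exact fun h => hE5 (h.symm.trans hw8v.symm)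
      · exact fun h => hBT 6 (hw8v.trans h)
      · exact fun h => hE6 (h.symm.trans hw9v.symm)
      · exact fun h => hBT 7 (hw9v.trans h)
  by_cases hE2 : w 2 = w 5
  · -- pentagon (y, x, w5, w6, w7)
    refine FaceHelper.pent_helper h4 h53 x y z (w 5) (w 6) (w 7) axy ayz azx
      ?_ (hGadj 5) (hGadj 6) ?_ ?_ ?_ ?_ ?_ (fun h => hBT 5 h.symm)
    · have hh : G.Adj (w 1) (w 2) := hGadj 1
      rw [hw1, hE2] at hh
      exact hh
    · have hh : G.Adj (w 7) (w 8) := hGadj 7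
      rw [hw8v] at hh
      exact hh
    · exact fun h => hnotE 2 3 (by norm_num) hE2 ((h.symm.trans hw8v.symm : w 5 = w 8))
    · exact fun h => hBT 6 (hw8v.trans h)
    · exact fun h => hE6 (h.symm.trans hw9v.symm)
    · exact fun h => hBT 7 (hw9v.trans h)
  by_cases hE3 : w 3 = w 6
  · -- pentagon (y, x, w2, w6, w7)
    refine FaceHelper.pent_helper h4 h53 x y z (w 2) (w 6) (w 7) axy ayz azx
      ?_ ?_ (hGadj 6) ?_ ?_ ?_ ?_ ?_ ?_
    · have hh : G.Adj (w 1) (w 2) := hGadj 1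
      rw [hw1] at hh
      exact hh
    · have hh : G.Adj (w 2) (w 3) := hGadj 2
      rw [hE3] at hh
      exact hh
    · have hh : G.Adj (w 7) (w 8) := hGadj 7
      rw [hw8v] at hh
      exact hh
    · exact fun h => hBT 0 (h.symm.trans hw0.symm)
    · exact fun h => hBT 6 (hw8v.trans h)
    · exact fun h => hE6 (h.symm.trans hw9v.symm)
    · exact fun h => hBT 7 (hw9v.trans h)
    · exact fun h => hE7 (h.symm.trans ((hw8 2).symm : w 2 = w 10))
  by_cases hE4 : w 4 = w 7
  · -- pentagon (y, x, w2, w3, w7)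
    refine FaceHelper.pent_helper h4 h53 x y z (w 2) (w 3) (w 7) axy ayz azx
      ?_ (hGadj 2) ?_ ?_ ?_ ?_ ?_ ?_ ?_
    · have hh : G.Adj (w 1) (w 2) := hGadj 1
      rw [hw1] at hh
      exact hh
    · have hh : G.Adj (w 3) (w 4) := hGadj 3
      rw [hE4] at hh
      exact hh
    · have hh : G.Adj (w 7) (w 8) := hGadj 7
      rw [hw8v] at hh
      exact hh
    · exact fun h => hBT 0 (h.symm.trans hw0.symm)
    · exact fun h => hE0 (hw0.trans h)
    · exact fun h => hBT 1 (h.symm.trans hw1.symm)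
    · exact fun h => hBT 7 (hw9v.trans h)
    · exact fun h => hE7 (h.symm.trans ((hw8 2).symm : w 2 = w 10))
  by_cases hE5 : w 5 = w 8
  · -- pentagon (y, x, w2, w3, w4)
    refine FaceHelper.pent_helper h4 h53 x y z (w 2) (w 3) (w 4) axy ayz azx
      ?_ (hGadj 2) (hGadj 3) ?_ ?_ ?_ ?_ ?_ (fun h => hBT 2 h.symm)
    · have hh : G.Adj (w 1) (w 2) := hGadj 1
      rw [hw1] at hh
      exact hh
    · have hh : G.Adj (w 4) (w 5) := hGadj 4
      rw [hE5, hw8v] at hh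
      exact hh
    · exact fun h => hBT 0 (h.symm.trans hw0.symm)
    · exact fun h => hE0 (hw0.trans h)
    · exact fun h => hBT 1 (h.symm.trans hw1.symm)
    · exact fun h => hE1 (hw1.trans h)
  -- all vertices of the 8-walk are distinct
  have hwmod : ∀ i, w i = w (i % 8) := fun i => congrArg (fun g : G.Dart => g.fst) (hDmod i)
  have hnEall : ∀ i, ¬ (w i = w (i+3)) := by
    intro i hEi
    have hkey : w (i % 8) = w ((i+3) % 8) := (hwmod i).symm.trans (hEi.trans (hwmod (i+3)))
    have hr : i % 8 = 0 ∨ i % 8 = 1 ∨ i % 8 = 2 ∨ i % 8 = 3 ∨ i % 8 = 4 ∨ i % 8 = 5 ∨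
        i % 8 = 6 ∨ i % 8 = 7 := by omega
    rcases hr with h|h|h|h|h|h|h|h
    · rw [h, show (i+3) % 8 = 3 by omega] at hkey; exact hE0 hkey
    · rw [h, show (i+3) % 8 = 4 by omega] at hkey; exact hE1 hkey
    · rw [h, show (i+3) % 8 = 5 by omega] at hkey; exact hE2 hkey
    · rw [h, show (i+3) % 8 = 6 by omega] at hkey; exact hE3 hkey
    · rw [h, show (i+3) % 8 = 7 by omega] at hkey; exact hE4 hkey
    · rw [h, show (i+3) % 8 = 0 by omega] at hkey
      exact hE5 (hkey.trans (hw0.trans hw8v.symm))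
    · rw [h, show (i+3) % 8 = 1 by omega] at hkey
      exact hE6 (hkey.trans (hw1.trans hw9v.symm))
    · rw [h, show (i+3) % 8 = 2 by omega] at hkey
      exact hE7 (hkey.trans ((hw8 2).symm : w 2 = w 10))
  have hwNe : ∀ i k, 1 ≤ k → k ≤ 7 → w (i+k) ≠ w i := by
    intro i k h1 h7
    interval_cases k
    · exact (hGadj i).ne'
    · exact hBT i
    · exact fun h => hnEall i h.symm
    · exact hDiff4 i
    · exact fun h => hnEall (i+5) ((h.trans (hw8 i).symm : w (i+5) = w (i+8)))
    · exact fun h => hBT (i+6) (((hw8 i).trans h.symm : w (i+8) = w (i+6)))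
    · exact fun h => (hGadj (i+7)).ne ((h.trans (hw8 i).symm : w (i+7) = w (i+8)))
  -- where is z?
  by_cases hz2 : z = w 2
  · exact hCR1 0 hw0 hw1 hz2.symm
  by_cases hz7 : z = w 7
  · exact hCR2 7 hz7.symm hw8v hw9v
  by_cases hz3 : z = w 3
  · refine FaceHelper.no4cycle h4 y x (w 2) z axy.symm ?_ ?_ ayz.symm ?_ azx.ne'
    · have hh : G.Adj (w 1) (w 2) := hGadj 1
      rw [hw1] at hh
      exact hh
    · have hh : G.Adj (w 2) (w 3) := hGadj 2
      rw [← hz3] at hh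
      exact hh
    · exact fun h => hBT 0 (h.symm.trans hw0.symm)
  by_cases hz4 : z = w 4
  · refine FaceHelper.no4cycle h4 x (w 2) (w 3) z ?_ (hGadj 2) ?_ azx ?_ ?_
    · have hh : G.Adj (w 1) (w 2) := hGadj 1
      rw [hw1] at hh
      exact hh
    · have hh : G.Adj (w 3) (w 4) := hGadj 3
      rw [← hz4] at hh
      exact hh
    · exact fun h => hBT 1 (h.symm.trans hw1.symm)
    · exact fun h => hBT 2 (hz4.symm.trans h.symm)
  by_cases hz5 : z = w 5
  · refine FaceHelper.no4cycle h4 y (w 7) (w 6) z ?_ (hGadj 6).symm ?_ ayz.symm ?_ ?_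
    · have hh : G.Adj (w 7) (w 8) := hGadj 7
      rw [hw8v] at hh
      exact hh.symm
    · have hh : G.Adj (w 5) (w 6) := hGadj 5
      rw [← hz5] at hh
      exact hh.symm
    · exact fun h => hBT 6 (hw8v.trans h)
    · exact fun h => hBT 5 (h.trans hz5)
  by_cases hz6 : z = w 6
  · refine FaceHelper.no4cycle h4 x y (w 7) z axy ?_ ?_ azx ?_ ayz.ne
    · have hh : G.Adj (w 7) (w 8) := hGadj 7
      rw [hw8v] at hh
      exact hh.symm
    · have hh : G.Adj (w 6) (w 7) := hGadj 6
      rw [← hz6] at hh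
      exact hh.symm
    · exact fun h => hBT 7 (hw9v.trans h)
  -- z is not on the 8-cycle: 9-cycle
  set vf : ℕ → V := fun i => if i % 9 = 0 then z else w (i % 9) with hvf
  have hv : ∀ m, 1 ≤ m → m ≤ 8 → vf m = w m := by
    intro m h1 h2
    show (if m % 9 = 0 then z else w (m % 9)) = w m
    rw [Nat.mod_eq_of_lt (by omega), if_neg (by omega)]
  have hkey := FaceHelper.cycle_of_fn (G := G) (n := 9) (by norm_num) vf ?_ ?_ ?_
  rotate_left
  · intro i hi
    interval_cases i
    · show G.Adj z (w 1)
      rw [hw1]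
      exact azx
    · exact hGadj 1
    · exact hGadj 2
    · exact hGadj 3
    · exact hGadj 4
    · exact hGadj 5
    · exact hGadj 6
    · exact hGadj 7
    · show G.Adj (w 8) z
      rw [hw8v]
      exact ayz
  · rfl
  · intro i j hij hj
    rcases Nat.eq_zero_or_pos i with rfl | hi0
    · show z ≠ vf j
      interval_cases j
      · show z ≠ w 1
        rw [hw1]
        exact azx.ne
      · exact hz2
      · exact hz3
      · exact hz4
      · exact hz5
      · exact hz6
      · exact hz7
      · show z ≠ w 8
        rw [hw8v]
        exact ayz.ne'
    · rw [hv i (by omega) (by omega), hv j (by omega) (by omega)]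
      intro h
      refine hwNe i (j-i) (by omega) (by omega) ?_
      rw [show i + (j-i) = j by omega]
      exact h.symm
  obtain ⟨c, hc, hlen, -, -⟩ := hkey
  exact h9 _ c hc hlen
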